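/- For the standard normal distribution, for every μ ∈ (0, 1/2) the function y ↦ φ(Φ⁻¹(y)) / (y(1-y))^{1-μ} is bounded on (0,1). -/

import Mathlib

open Set Real MeasureTheory

/-- For the standard normal, for every `μ ∈ (0,1/2)` the function
`y ↦ φ(Φ⁻¹(y)) / (y(1-y))^(1-μ)` is bounded on `(0,1)`. -/
theorem stmt3 (φ Φ Φinv : ℝ → ℝ)
    (hφ : ∀ x, φ x = (Real.sqrt (2 * π))⁻¹ * Real.exp (-x ^ 2 / 2))
    (hΦ : ∀ x, Φ x = ∫ t in Iic x, φ t)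
    (hinv : ∀ y ∈ Ioo (0:ℝ) 1, Φ (Φinv y) = y)
    (hinv' : ∀ x, Φinv (Φ x) = x) :
    ∀ μ ∈ Ioo (0:ℝ) (1/2), ∃ M : ℝ,
      ∀ y ∈ Ioo (0:ℝ) 1, φ (Φinv y) / (y * (1 - y)) ^ (1 - μ) ≤ M := by
  intro μ hμ
  obtain ⟨hμ0, hμ2⟩ := hμ
  set c : ℝ := (Real.sqrt (2 * π))⁻¹ with hc
  have hπ : (0:ℝ) < 2 * π := by positivity
  have hc0 : 0 < c := by
    rw [hc]; exact inv_pos.mpr (Real.sqrt_pos.mpr hπ)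
  have hφeq : φ = fun t => c * Real.exp (-(1/2) * t ^ 2) := by
    funext t
    rw [hφ t]
    congr 1
    ring
  have hφpos : ∀ x, 0 < φ x := by
    intro x; rw [hφeq]; positivity
  have hint : Integrable φ := by
    rw [hφeq]
    exact (integrable_exp_neg_mul_sq (by norm_num : (0:ℝ) < 1/2)).const_mul c
  have htotal : ∫ t, φ t = 1 := by
    rw [hφeq, MeasureTheory.integral_const_mul, integral_gaussian]
    have : π / (1/2 : ℝ) = 2 * π := by ring
    rw [this, hc]
    exact inv_mul_cancel₀ (ne_of_gt (Real.sqrt_pos.mpr hπ))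
  have hΦ_nonneg : ∀ b, 0 ≤ Φ b := by
    intro b
    rw [hΦ]
    exact MeasureTheory.setIntegral_nonneg measurableSet_Iic fun t _ => (hφpos t).le
  have hΦ_le_one : ∀ b, Φ b ≤ 1 := by
    intro b
    rw [hΦ, ← htotal]
    exact MeasureTheory.setIntegral_le_integral hint
      (Filter.Eventually.of_forall fun t => (hφpos t).le)
  have hstep : ∀ a R : ℝ, 0 ≤ R → (∀ t ∈ Ioc a (a+1), |t| ≤ R) →
      c * Real.exp (-R ^ 2 / 2) ≤ Φ (a+1) - Φ a := by
    intro a R hR hbound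
    have hsplit : Φ (a+1) = Φ a + ∫ t in Ioc a (a+1), φ t := by
      rw [hΦ, hΦ, ← MeasureTheory.setIntegral_union (Set.Iic_disjoint_Ioc le_rfl)
        measurableSet_Ioc hint.integrableOn hint.integrableOn,
        Set.Iic_union_Ioc_eq_Iic (by linarith : a ≤ a + 1)]
    rw [hsplit]
    have hmeas : volume (Ioc a (a+1)) ≠ ⊤ := by
      rw [Real.volume_Ioc]; exact ENNReal.ofReal_ne_top
    have hge : c * Real.exp (-R ^ 2 / 2) * (volume (Ioc a (a+1))).toReal
        ≤ ∫ t in Ioc a (a+1), φ t := by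
      rw [mul_comm, ← smul_eq_mul, ← MeasureTheory.measureReal_def]
      apply MeasureTheory.setIntegral_ge_of_const_le measurableSet_Ioc hmeas
      · intro t ht
        rw [hφ t]
        have h1 : t ^ 2 ≤ R ^ 2 := by
          have := hbound t ht
          nlinarith [abs_nonneg t, sq_abs t]
        exact mul_le_mul_of_nonneg_left (Real.exp_le_exp.mpr (by linarith)) hc0.le
      · exact hint.integrableOn
    have hvol : (volume (Ioc a (a+1))).toReal = 1 := by
      rw [Real.volume_Ioc]; norm_num
    rw [hvol, mul_one] at hge
    linarith
  -- the final bound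
  set K : ℝ := (1 - μ) / (2 * μ) with hK
  refine ⟨c * ((c/2) ^ (1-μ))⁻¹ * Real.exp K, ?_⟩
  intro y hy
  obtain ⟨hy0, hy1⟩ := hy
  set x := Φinv y with hx
  have hyx : Φ x = y := hinv y ⟨hy0, hy1⟩
  set t : ℝ := |x| with ht
  have ht0 : 0 ≤ t := abs_nonneg x
  set L : ℝ := c * Real.exp (-(t+1) ^ 2 / 2) with hL
  have hL0 : 0 < L := by positivity
  have h1 : L ≤ y := by
    have := hstep (x - 1) (t + 1) (by linarith) (by
      intro s hs
      obtain ⟨hs1, hs2⟩ := hs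
      rw [abs_le]
      constructor <;> [skip; skip] <;>
        nlinarith [neg_abs_le x, le_abs_self x])
    have heq : x - 1 + 1 = x := by ring
    rw [heq, hyx] at this
    have := hΦ_nonneg (x - 1)
    linarith
  have h2 : L ≤ 1 - y := by
    have := hstep x (t + 1) (by linarith) (by
      intro s hs
      obtain ⟨hs1, hs2⟩ := hs
      rw [abs_le]
      constructor <;> nlinarith [neg_abs_le x, le_abs_self x])
    have := hΦ_le_one (x + 1)
    rw [hyx] at *
    linarith
  have hprod : L / 2 ≤ y * (1 - y) := by
    rcases le_or_gt y (1/2) with h | h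
    · nlinarith
    · nlinarith
  have hμ1 : 0 < 1 - μ := by linarith
  have hrpow : (L/2) ^ (1-μ) ≤ (y * (1 - y)) ^ (1-μ) :=
    Real.rpow_le_rpow (by positivity) hprod hμ1.le
  have hA0 : 0 < (L/2) ^ (1-μ) := Real.rpow_pos_of_pos (by positivity) _
  have step1 : φ x / (y * (1 - y)) ^ (1-μ) ≤ φ x / (L/2) ^ (1-μ) := by
    apply div_le_div_of_nonneg_left (hφpos x).le hA0 hrpow
  refine le_trans step1 ?_
  rw [div_le_iff₀ hA0]
  -- rewrite (L/2)^(1-μ)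
  have hLdiv : L / 2 = (c/2) * Real.exp (-(t+1) ^ 2 / 2) := by rw [hL]; ring
  have hA : (L/2) ^ (1-μ) = (c/2) ^ (1-μ) * Real.exp ((-(t+1) ^ 2 / 2) * (1-μ)) := by
    rw [hLdiv, Real.mul_rpow (by positivity) (Real.exp_pos _).le, ← Real.exp_mul]
  rw [hA]
  have hc2 : (0:ℝ) < (c/2) ^ (1-μ) := Real.rpow_pos_of_pos (by positivity) _
  have hcancel : ((c/2) ^ (1-μ))⁻¹ * (c/2) ^ (1-μ) = 1 := inv_mul_cancel₀ (ne_of_gt hc2)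
  have hgoal : φ x ≤ c * Real.exp (K + (-(t+1) ^ 2 / 2) * (1-μ)) := by
    rw [hφ x]
    apply mul_le_mul_of_nonneg_left _ hc0.le
    apply Real.exp_le_exp.mpr
    have hx2 : x ^ 2 = t ^ 2 := (sq_abs x).symm
    rw [hK, hx2, ← sub_nonneg]
    have heq : (1 - μ) / (2 * μ) + -(t + 1) ^ 2 / 2 * (1 - μ) - (-t ^ 2 / 2)
        = (μ * t - (1 - μ)) ^ 2 / (2 * μ) := by
      field_simp
      ring
    rw [heq]
    positivity
  calc φ x ≤ c * Real.exp (K + (-(t+1) ^ 2 / 2) * (1-μ)) := hgoal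
    _ = c * ((c/2) ^ (1-μ))⁻¹ * Real.exp K * ((c/2) ^ (1-μ) * Real.exp ((-(t+1) ^ 2 / 2) * (1-μ))) := by
        rw [Real.exp_add]; field_simp
    _ ≤ _ := le_rfl
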